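/- Every distance-2 MDS code in F_3^n (a set M ⊆ F_3^n with |M| = 3^{n-1} and minimum Hamming distance 2) is the solution set of an equation a_0 x_0 + ... + a_{n-1} x_{n-1} = b for some a_i ∈ {1,2} and b ∈ Z/3; in particular all distance-2 MDS codes in F_3^n are equivalent under isotopies (coordinatewise alphabet permutations). -/

import Mathlib

namespace Stmt12Aux

def cns {m : ℕ} (c : ZMod 3) (x : Fin m → ZMod 3) : Fin (m+1) → ZMod 3 := Fin.cons c x

@[simp] lemma cns_zero {m : ℕ} (c : ZMod 3) (x : Fin m → ZMod 3) : cns c x 0 = c := rfl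

@[simp] lemma cns_succ {m : ℕ} (c : ZMod 3) (x : Fin m → ZMod 3) (j : Fin m) :
    cns c x j.succ = x j := by simp [cns]

lemma cns_self_tail {m : ℕ} (x : Fin (m+1) → ZMod 3) : cns (x 0) (Fin.tail x) = x :=
  Fin.cons_self_tail x

lemma cns_injective {m : ℕ} (c : ZMod 3) : Function.Injective (cns (m := m) c) :=
  fun x y h => by
    funext j
    have := congrFun h j.succ
    simpa using this

lemma hd_cns {m : ℕ} (a b : ZMod 3) (x y : Fin m → ZMod 3) :
    hammingDist (cns a x) (cns b y) = (if a = b then 0 else 1) + hammingDist x y := by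
  unfold hammingDist
  rw [Finset.card_filter, Finset.card_filter, Fin.sum_univ_succ]
  simp only [cns_zero, cns_succ]
  by_cases h : a = b <;> simp [h]

lemma sq1 : ∀ u : ZMod 3, u = 1 ∨ u = 2 → u * u = 1 := by decide
lemma sq1' : ∀ u : ZMod 3, u ≠ 0 → u * u = 1 := by decide
lemma hcases : ∀ c : ZMod 3, c = 0 ∨ c = 1 ∨ c = 2 := by decide

/-- Singleton bound. -/
lemma sing_bound {m : ℕ} (C : Set (Fin (m+1) → ZMod 3))
    (hdist : ∀ x ∈ C, ∀ y ∈ C, x ≠ y → 2 ≤ hammingDist x y) : C.ncard ≤ 3 ^ m := by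
  have hinj : Set.InjOn Fin.tail C := by
    intro x hx y hy hxy
    by_contra hne
    have h2 := hdist x hx y hy hne
    have hle : hammingDist x y ≤ 1 := by
      rw [← cns_self_tail x, ← cns_self_tail y, hd_cns, hxy, hammingDist_self]
      split <;> omega
    omega
  calc C.ncard = (Fin.tail '' C).ncard := (Set.ncard_image_of_injOn hinj).symm
    _ ≤ (Set.univ : Set (Fin m → ZMod 3)).ncard :=
        Set.ncard_le_ncard (Set.subset_univ _) Set.finite_univ
    _ = 3 ^ m := by rw [Set.ncard_univ, Nat.card_eq_fintype_card]; simp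

/-- Normalization. -/
lemma norm_hyp {m : ℕ} (a : Fin (m+1) → ZMod 3) (b : ZMod 3)
    (ha : ∀ i, a i = 1 ∨ a i = 2) :
    ∃ (a' : Fin (m+1) → ZMod 3) (b' : ZMod 3), (∀ i, a' i = 1 ∨ a' i = 2) ∧ a' 0 = 1 ∧
      ({x | ∑ i, a i * x i = b} : Set (Fin (m+1) → ZMod 3)) = {x | ∑ i, a' i * x i = b'} := by
  rcases ha 0 with h0 | h0
  · exact ⟨a, b, ha, h0, rfl⟩
  · have hmul : ∀ u : ZMod 3, u = 1 ∨ u = 2 → (2 * u = 1 ∨ 2 * u = 2) := by decide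
    refine ⟨fun i => 2 * a i, 2 * b, fun i => hmul (a i) (ha i), by show 2 * a 0 = 1; rw [h0]; decide, ?_⟩
    ext x
    simp only [Set.mem_setOf_eq, mul_assoc, ← Finset.mul_sum]
    constructor
    · intro h; rw [h]
    · intro h
      have h4 : ∀ t : ZMod 3, 2 * (2 * t) = t := by decide
      rw [← h4 (∑ i, a i * x i), h, h4]

end Stmt12Aux

namespace Stmt12Aux

/-- Main structure lemma. -/
lemma key (m : ℕ) : ∀ M : Set (Fin (m+1) → ZMod 3), M.ncard = 3 ^ m →
    (∀ x ∈ M, ∀ y ∈ M, x ≠ y → 2 ≤ hammingDist x y) →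
    ∃ (a : Fin (m+1) → ZMod 3) (b : ZMod 3),
      (∀ i, a i = 1 ∨ a i = 2) ∧ M = {x | ∑ i, a i * x i = b} := by
  induction m with
  | zero =>
    intro M hcard _
    obtain ⟨v, rfl⟩ := Set.ncard_eq_one.mp (by simpa using hcard)
    refine ⟨fun _ => 1, v 0, fun _ => Or.inl rfl, ?_⟩
    ext x
    simp only [Set.mem_singleton_iff, Set.mem_setOf_eq, Fin.sum_univ_succ, Fin.sum_univ_zero,
      one_mul, add_zero]
    constructor
    · rintro rfl; rfl
    · intro h; funext i; rw [Fin.fin_one_eq_zero i]; exact h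
  | succ m ih =>
    intro M hcard hdist
    set S : ZMod 3 → Set (Fin (m+1) → ZMod 3) := fun c => {x' | cns c x' ∈ M} with hSdef
    have hdistS : ∀ c : ZMod 3, ∀ x' ∈ S c, ∀ y' ∈ S c, x' ≠ y' → 2 ≤ hammingDist x' y' := by
      intro c x' hx y' hy hne
      have hne2 : cns c x' ≠ cns c y' := fun h => hne (cns_injective c h)
      have := hdist _ hx _ hy hne2
      rwa [hd_cns, if_pos rfl, zero_add] at this
    have hdisj : ∀ c d : ZMod 3, c ≠ d → ∀ x', x' ∈ S c → x' ∉ S d := by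
      intro c d hcd x' hc hd
      have hne : cns c x' ≠ cns d x' := by
        intro h
        exact hcd (by simpa using congrFun h 0)
      have h2 := hdist _ hc _ hd hne
      rw [hd_cns, if_neg hcd, hammingDist_self] at h2
      omega
    have hM_eq : M = (cns 0 '' S 0) ∪ (cns 1 '' S 1) ∪ (cns 2 '' S 2) := by
      ext x
      constructor
      · intro hx
        have hins : ∀ c : ZMod 3, x 0 = c → x ∈ cns c '' S c := by
          intro c hc
          exact ⟨Fin.tail x, by
            simp only [hSdef, Set.mem_setOf_eq, ← hc, cns_self_tail]; exact hx,
            by rw [← hc, cns_self_tail]⟩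
        rcases hcases (x 0) with hc | hc | hc
        · exact Or.inl (Or.inl (hins 0 hc))
        · exact Or.inl (Or.inr (hins 1 hc))
        · exact Or.inr (hins 2 hc)
      · rintro ((⟨x', hx', rfl⟩ | ⟨x', hx', rfl⟩) | ⟨x', hx', rfl⟩) <;> exact hx'
    have hle : ∀ c : ZMod 3, (S c).ncard ≤ 3 ^ m := fun c => sing_bound _ (hdistS c)
    have hsum : 3 ^ (m+1) ≤ (S 0).ncard + (S 1).ncard + (S 2).ncard := by
      have himg : ∀ c : ZMod 3, (cns c '' S c).ncard = (S c).ncard :=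
        fun c => Set.ncard_image_of_injective _ (cns_injective c)
      calc (3:ℕ) ^ (m+1) = M.ncard := hcard.symm
        _ = ((cns 0 '' S 0) ∪ (cns 1 '' S 1) ∪ (cns 2 '' S 2)).ncard := by rw [← hM_eq]
        _ ≤ ((cns 0 '' S 0) ∪ (cns 1 '' S 1)).ncard + (cns 2 '' S 2).ncard :=
            Set.ncard_union_le _ _
        _ ≤ (cns 0 '' S 0).ncard + (cns 1 '' S 1).ncard + (cns 2 '' S 2).ncard :=
            Nat.add_le_add_right (Set.ncard_union_le _ _) _
        _ = (S 0).ncard + (S 1).ncard + (S 2).ncard := by rw [himg, himg, himg]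
    have hScard : ∀ c : ZMod 3, (S c).ncard = 3 ^ m := by
      have e0 := hle 0; have e1 := hle 1; have e2 := hle 2
      have hp : (3:ℕ) ^ (m+1) = 3 ^ m * 3 := pow_succ 3 m
      intro c
      rcases hcases c with rfl | rfl | rfl <;> omega
    have hS : ∀ c : ZMod 3, ∃ (a : Fin (m+1) → ZMod 3) (b : ZMod 3),
        (∀ i, a i = 1 ∨ a i = 2) ∧ a 0 = 1 ∧ S c = {x' | ∑ i, a i * x' i = b} := by
      intro c
      obtain ⟨a, b, ha, hSc⟩ := ih (S c) (hScard c) (hdistS c)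
      obtain ⟨a', b', ha', h0, heq⟩ := norm_hyp a b ha
      exact ⟨a', b', ha', h0, hSc.trans heq⟩
    choose A B hA hA0 hSeq using hS
    have hAeq : ∀ c d : ZMod 3, A c = A d := by
      intro c d
      by_cases hcd : c = d
      · rw [hcd]
      by_contra hne
      obtain ⟨i, hi⟩ : ∃ i, A c i ≠ A d i := Function.ne_iff.mp hne
      have hi0 : i ≠ 0 := fun h => hi (by rw [h, hA0 c, hA0 d])
      have hz : A c i - A d i ≠ 0 := sub_ne_zero.mpr hi
      set e : ZMod 3 := (A c i - A d i) * (B c - B d) with he_def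
      have he : (A c i - A d i) * e = B c - B d := by
        rw [he_def, ← mul_assoc, sq1' _ hz, one_mul]
      set x' : Fin (m+1) → ZMod 3 :=
        fun j => if j = 0 then B c - A c i * e else if j = i then e else 0 with hx'def
      have hcomp : ∀ v : Fin (m+1) → ZMod 3, v 0 = 1 →
          ∑ j, v j * x' j = (B c - A c i * e) + v i * e := by
        intro v hv0
        rw [← Finset.sum_subset (Finset.subset_univ ({0, i} : Finset (Fin (m+1))))
          (fun j _ hj => ?_)]
        · rw [Finset.sum_pair (Ne.symm hi0)]
          simp [hx'def, hv0, hi0]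
        · have hj0 : j ≠ 0 := fun h => hj (by simp [h])
          have hji : j ≠ i := fun h => hj (by simp [h])
          simp [hx'def, hj0, hji]
      have h1 : ∑ j, A c j * x' j = B c := by
        rw [hcomp (A c) (hA0 c)]; ring
      have h2 : ∑ j, A d j * x' j = B d := by
        rw [hcomp (A d) (hA0 d)]; linear_combination -he
      have hxc : x' ∈ S c := by rw [hSeq c]; exact h1
      have hxd : x' ∈ S d := by rw [hSeq d]; exact h2
      exact hdisj c d hcd x' hxc hxd
    have hBne : ∀ c d : ZMod 3, c ≠ d → B c ≠ B d := by
      intro c d hcd hB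
      obtain ⟨x', hx'⟩ : (S c).Nonempty :=
        Set.nonempty_of_ncard_ne_zero (by rw [hScard c]; positivity)
      have hxc : ∑ i, A c i * x' i = B c := by rw [hSeq c] at hx'; exact hx'
      have hxd : x' ∈ S d := by
        rw [hSeq d]
        show ∑ i, A d i * x' i = B d
        rw [← hAeq c d, ← hB]; exact hxc
      exact hdisj c d hcd x' hx' hxd
    have hu0 : B 1 - B 0 ≠ 0 := sub_ne_zero.mpr (hBne 1 0 (by decide))
    set u : ZMod 3 := B 1 - B 0 with hu_def
    have hB : ∀ c : ZMod 3, B c = u * c + B 0 := by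
      intro c
      rcases hcases c with rfl | rfl | rfl
      · ring
      · rw [hu_def]; ring
      · have h3 : ∀ w p q : ZMod 3, w ≠ p → w ≠ q → p ≠ q → w = (q - p) * 2 + p := by decide
        have := h3 (B 2) (B 0) (B 1) (hBne 2 0 (by decide)) (hBne 2 1 (by decide))
          (hBne 0 1 (by decide))
        rw [hu_def, mul_comm]; rw [mul_comm] at this; exact this
    refine ⟨cns (-u) (A 0), B 0, ?_, ?_⟩
    · intro i
      refine Fin.cases ?_ (fun j => ?_) i
      · rw [cns_zero]
        have hneg : ∀ v : ZMod 3, v ≠ 0 → (-v = 1 ∨ -v = 2) := by decide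
        exact hneg u hu0
      · rw [cns_succ]; exact hA 0 j
    · ext x
      have hmem : x ∈ M ↔ Fin.tail x ∈ S (x 0) := by
        rw [hSdef]
        simp only [Set.mem_setOf_eq, cns_self_tail]
      have hR : ∑ i, cns (-u) (A 0) i * x i
          = -u * x 0 + ∑ j : Fin (m+1), A 0 j * Fin.tail x j := by
        rw [Fin.sum_univ_succ]
        simp only [cns_zero, cns_succ]
        rfl
      rw [hmem, hSeq (x 0)]
      simp only [Set.mem_setOf_eq]
      rw [hAeq (x 0) 0, hB (x 0), hR]
      constructor
      · intro h; linear_combination h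
      · intro h; linear_combination h

end Stmt12Aux

open Stmt12Aux in
/-- Every distance-2 MDS code in `F_3^n` (of size `3^{n-1}` and minimum
Hamming distance 2) is the solution set of an equation `a_0x_0 + … + a_{n-1}x_{n-1} = b`
with all `a_i ∈ {1,2}`; in particular any two distance-2 MDS codes in `F_3^n` are
equivalent under an isotopy (coordinatewise alphabet permutations). -/
theorem stmt_12 (n : ℕ) (M M' : Set (Fin n → ZMod 3))
    (hMcard : M.ncard = 3 ^ (n - 1))
    (hMdist : ∀ x ∈ M, ∀ y ∈ M, x ≠ y → 2 ≤ hammingDist x y)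
    (hM'card : M'.ncard = 3 ^ (n - 1))
    (hM'dist : ∀ x ∈ M', ∀ y ∈ M', x ≠ y → 2 ≤ hammingDist x y) :
    (∃ (a : Fin n → ZMod 3) (b : ZMod 3),
      (∀ i, a i = 1 ∨ a i = 2) ∧ M = {x | ∑ i, a i * x i = b}) ∧
    ∃ θ : Fin n → Equiv.Perm (ZMod 3),
      (fun x : Fin n → ZMod 3 => fun i => θ i (x i)) '' M = M' := by
  cases n with
  | zero =>
    have huniv : (Set.univ : Set (Fin 0 → ZMod 3)).ncard = 1 := by
      rw [Set.ncard_univ, Nat.card_eq_fintype_card]; simp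
    have hM : M = Set.univ :=
      Set.eq_of_subset_of_ncard_le (Set.subset_univ M) (by rw [huniv]; simpa using hMcard.symm.le)
    have hM' : M' = Set.univ :=
      Set.eq_of_subset_of_ncard_le (Set.subset_univ M') (by rw [huniv]; simpa using hM'card.symm.le)
    constructor
    · refine ⟨fun i => i.elim0, 0, fun i => i.elim0, ?_⟩
      rw [hM]; ext x; simp
    · refine ⟨fun _ => 1, ?_⟩
      rw [hM, hM']
      ext y
      simp only [Set.image_univ, Set.mem_range, Set.mem_univ, iff_true]
      exact ⟨y, funext fun i => i.elim0⟩
  | succ m =>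
    obtain ⟨a, b, ha, hMeq⟩ := key m M (by simpa using hMcard) hMdist
    obtain ⟨a', b', ha', hM'eq⟩ := key m M' (by simpa using hM'card) hM'dist
    refine ⟨⟨a, b, ha, hMeq⟩, ?_⟩
    set c : Fin (m+1) → ZMod 3 := fun i => if i = 0 then b' - b else 0 with hcdef
    have h1 : ∀ i, a i * a i = 1 := fun i => sq1 (a i) (ha i)
    have h2 : ∀ i, a' i * a' i = 1 := fun i => sq1 (a' i) (ha' i)
    refine ⟨fun i => ⟨fun t => a' i * (a i * t + c i), fun t => a i * (a' i * t - c i),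
      fun t => by linear_combination (a i * a i * t + a i * c i) * h2 i + t * h1 i,
      fun t => by linear_combination (a' i * a' i * t - a' i * c i) * h1 i + t * h2 i⟩, ?_⟩
    have hcs : ∑ i, c i = b' - b := by rw [hcdef]; simp
    ext y
    simp only [Set.mem_image, Equiv.coe_fn_mk]
    constructor
    · rintro ⟨x, hx, rfl⟩
      rw [hM'eq]
      show ∑ i, a' i * (a' i * (a i * x i + c i)) = b'
      have hterm : ∀ i : Fin (m+1), a' i * (a' i * (a i * x i + c i)) = a i * x i + c i :=
        fun i => by rw [← mul_assoc, h2 i, one_mul]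
      rw [Finset.sum_congr rfl (fun i _ => hterm i), Finset.sum_add_distrib, hcs]
      have hxb : ∑ i, a i * x i = b := by rw [hMeq] at hx; exact hx
      rw [hxb]; ring
    · intro hy
      refine ⟨fun i => a i * (a' i * y i - c i), ?_, ?_⟩
      · rw [hMeq]
        show ∑ i, a i * (a i * (a' i * y i - c i)) = b
        have hterm : ∀ i : Fin (m+1), a i * (a i * (a' i * y i - c i)) = a' i * y i - c i :=
          fun i => by rw [← mul_assoc, h1 i, one_mul]
        rw [Finset.sum_congr rfl (fun i _ => hterm i), Finset.sum_sub_distrib, hcs]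
        have hyb : ∑ i, a' i * y i = b' := by rw [hM'eq] at hy; exact hy
        rw [hyb]; ring
      · funext i
        show a' i * (a i * (a i * (a' i * y i - c i)) + c i) = y i
        linear_combination (a' i * a' i * y i - a' i * c i) * h1 i + y i * h2 i
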